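/- Let b ≥ 2, k ≥ 1, l_k = b^k - 1, let (s^k_i)_{i=0}^{l_k} enumerate b^k in increasing lexicographic order, and let h ∈ C↑_sur(b^ω). Then the strictly increasing l_k-tuples from Y_h are exactly the tuples (max (f∘h)⁻¹(W_{s^k_i}))_{i < l_k} as f ranges over C↑_sur(b^ω). -/

import Mathlib

noncomputable section
open Classical

/-- Lexicographic strict order on `ℕ → Fin b`. -/
def lexLT (b : ℕ) (x y : ℕ → Fin b) : Prop :=
  ∃ n, (∀ m, m < n → x m = y m) ∧ x n < y n

/-- Lexicographic order `≤_lex` on `ℕ → Fin b`. -/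
def lexLE (b : ℕ) (x y : ℕ → Fin b) : Prop := x = y ∨ lexLT b x y

def IsGreatestLex (b : ℕ) (S : Set (ℕ → Fin b)) (x : ℕ → Fin b) : Prop :=
  x ∈ S ∧ ∀ y ∈ S, lexLE b y x

def IsLeastLex (b : ℕ) (S : Set (ℕ → Fin b)) (x : ℕ → Fin b) : Prop :=
  x ∈ S ∧ ∀ y ∈ S, lexLE b x y

/-- `S` is an interval for the lexicographic order. -/
def LexInterval (b : ℕ) (S : Set (ℕ → Fin b)) : Prop :=
  ∀ x ∈ S, ∀ y ∈ S, ∀ z, lexLE b x z → lexLE b z y → z ∈ S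

/-- The basic clopen set of sequences extending the finite sequence `s`. -/
def W (b : ℕ) (s : List (Fin b)) : Set (ℕ → Fin b) :=
  {x | ∀ i, (hi : i < s.length) → x i = s.get ⟨i, hi⟩}

/-- Continuous nondecreasing surjections of `b^ω`, i.e. members of `C↑_sur(b^ω)`. -/
def CSur (b : ℕ) (f : (ℕ → Fin b) → (ℕ → Fin b)) : Prop :=
  Continuous f ∧ Function.Surjective f ∧ ∀ x y, lexLE b x y → lexLE b (f x) (f y)

/-- A filtering on `b^ω`. -/
def Filtering (b : ℕ) (U : List (Fin b) → Set (ℕ → Fin b)) : Prop :=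
  (∀ s, (U s).Nonempty ∧ IsClopen (U s) ∧ LexInterval b (U s)) ∧
  U [] = Set.univ ∧
  (∀ s, U s = ⋃ i : Fin b, U (s ++ [i])) ∧
  (∀ s, ∀ i j : Fin b, i ≠ j → Disjoint (U (s ++ [i])) (U (s ++ [j]))) ∧
  (∀ s, ∀ i j : Fin b, i < j → ∀ x y,
    IsGreatestLex b (U (s ++ [i])) x → IsGreatestLex b (U (s ++ [j])) y → lexLT b x y)

/-- `A_b`: sequences eventually equal to `b-1` (the top of `Fin b`), except the constant
top sequence (the lexicographic maximum of `b^ω`). -/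
def AbSet (b : ℕ) : Set (ℕ → Fin b) :=
  {x | (∃ N, ∀ n, N ≤ n → ∀ j : Fin b, j ≤ x n) ∧ ¬ ∀ n, ∀ j : Fin b, j ≤ x n}

/-- `Y` is order isomorphic to `ℚ` with respect to the lexicographic order. -/
def OrderIsoQ (b : ℕ) (Y : Set (ℕ → Fin b)) : Prop :=
  ∃ e : ℚ ≃ Y, ∀ p q : ℚ, p ≤ q ↔ lexLE b (e p).1 (e q).1

/-- `Y_f = {max f⁻¹(W_s) : s ∈ b^{<ω}} \ {max b^ω}`. -/
def Yset (b : ℕ) (f : (ℕ → Fin b) → (ℕ → Fin b)) : Set (ℕ → Fin b) :=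
  {x | (∃ s : List (Fin b), IsGreatestLex b (f ⁻¹' W b s) x) ∧ ¬ ∀ n, ∀ j : Fin b, j ≤ x n}

/-- The metric `ρ_b` on `b^ω`. -/
def rhoB (b : ℕ) (x y : ℕ → Fin b) : ℝ :=
  if h : x = y then 0 else (2 : ℝ) ^ (-(Nat.find (Function.ne_iff.mp h) : ℤ))

/-- The sup-metric `ρ_∞` on `C↑_sur(b^ω)`. -/
def rhoInf (b : ℕ) (f g : (ℕ → Fin b) → (ℕ → Fin b)) : ℝ :=
  ⨆ x, rhoB b (f x) (g x)

/-- `⌊log₂(1/ε)⌋ + 1`. -/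
def kOf (ε : ℝ) : ℕ := ⌊Real.logb 2 (1 / ε)⌋₊ + 1

/-- The `l`-th odd tangent number `t_l = tan^{(2l-1)}(0)`. -/
def oddTangent (l : ℕ) : ℝ := iteratedDeriv (2 * l - 1) Real.tan 0

/-- The lexicographically increasing enumeration of `b^k`: `sEnum b k hb i` is the
`i`-th element of `b^k` in lexicographic order (base-`b` digits, most significant first). -/
def sEnum (b k : ℕ) (hb : 0 < b) (i : ℕ) : List (Fin b) :=
  List.ofFn fun j : Fin k => (⟨i / b ^ (k - 1 - (j : ℕ)) % b, Nat.mod_lt _ hb⟩ : Fin b)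

end

noncomputable section
open Classical

namespace FFR

variable {b : ℕ}

/-- bottom sequence -/
def bot' (hb : 2 ≤ b) : ℕ → Fin b := fun _ => ⟨0, by omega⟩
/-- top sequence -/
def top' (hb : 2 ≤ b) : ℕ → Fin b := fun _ => ⟨b - 1, by omega⟩

theorem tLT_iff {x y : ℕ → Fin b} :
    toLex x < toLex y ↔ ∃ n, (∀ m, m < n → x m = y m) ∧ x n < y n := Iff.rfl

theorem tLE_iff {x y : ℕ → Fin b} :
    toLex x ≤ toLex y ↔ toLex x < toLex y ∨ x = y := by
  rw [le_iff_lt_or_eq]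
  constructor
  · rintro (h | h); · exact Or.inl h
    · exact Or.inr (by exact_mod_cast h)
  · rintro (h | h); · exact Or.inl h
    · exact Or.inr (by exact_mod_cast h)

theorem lexLT_iff {x y : ℕ → Fin b} : lexLT b x y ↔ toLex x < toLex y := Iff.rfl

theorem lexLE_iff {x y : ℕ → Fin b} : lexLE b x y ↔ toLex x ≤ toLex y := by
  rw [lexLE, tLE_iff, lexLT_iff, or_comm]

/-- master ≤ lemma: at each potential first difference, `x` is below `y`. -/
theorem lex_le_of_forall {x y : ℕ → Fin b}
    (H : ∀ i, (∀ j, j < i → x j = y j) → x i ≤ y i) : toLex x ≤ toLex y := by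
  rcases eq_or_ne x y with h | h
  · exact le_of_eq (congrArg toLex h)
  · have h' := Function.ne_iff.mp h
    have hag : ∀ j, j < Nat.find h' → x j = y j := fun j hj =>
      not_not.mp (Nat.find_min h' hj)
    exact le_of_lt ⟨Nat.find h', hag, lt_of_le_of_ne (H _ hag) (Nat.find_spec h')⟩

theorem le_at {x y : ℕ → Fin b} (h : toLex x ≤ toLex y) (i : ℕ)
    (hag : ∀ j, j < i → x j = y j) : x i ≤ y i := by
  rcases tLE_iff.mp h with h' | rfl
  · obtain ⟨n, hn, hlt⟩ := h'
    rcases lt_trichotomy n i with hc | rfl | hc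
    · exact absurd (hag n hc) hlt.ne
    · exact hlt.le
    · exact (hn i hc).le
  · exact le_rfl

theorem sandwich {a c z : ℕ → Fin b} {m : ℕ} (hac : ∀ i, i < m → a i = c i)
    (h1 : toLex a ≤ toLex z) (h2 : toLex z ≤ toLex c) : ∀ i, i < m → z i = a i := by
  intro i
  induction i using Nat.strong_induction_on with
  | _ i IH =>
    intro him
    have hza : ∀ j, j < i → a j = z j := fun j hj => (IH j hj (hj.trans him)).symm
    have h3 : a i ≤ z i := le_at h1 i hza
    have h4 : z i ≤ c i := le_at h2 i (fun j hj =>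
      ((IH j hj (hj.trans him)).trans (hac j (hj.trans him))))
    exact le_antisymm (le_of_le_of_eq h4 (hac i him).symm) h3

theorem lex_le_pointwise {x y : ℕ → Fin b} (h : ∀ i, x i ≤ y i) : toLex x ≤ toLex y :=
  lex_le_of_forall fun i _ => h i

theorem bot'_le (hb : 2 ≤ b) (x : ℕ → Fin b) : toLex (bot' hb) ≤ toLex x :=
  lex_le_pointwise fun i => by simp [bot', Fin.le_def]

theorem le_top' (hb : 2 ≤ b) (x : ℕ → Fin b) : toLex x ≤ toLex (top' hb) :=
  lex_le_pointwise fun i => by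
    have := (x i).isLt; simp [top', Fin.le_def]; omega

/-- ≤ when agreeing on a prefix and `x` has all-0 tail. -/
theorem le_of_agree_bot_tail (hb : 2 ≤ b) {x y : ℕ → Fin b} {m : ℕ}
    (hag : ∀ i, i < m → x i = y i) (hx : ∀ i, m ≤ i → x i = ⟨0, by omega⟩) :
    toLex x ≤ toLex y :=
  lex_le_of_forall fun i _ => by
    rcases lt_or_ge i m with hi | hi
    · exact (hag i hi).le
    · rw [hx i hi]; exact Fin.mk_le_of_le_val (Nat.zero_le _)

theorem le_of_agree_top_tail (hb : 2 ≤ b) {x y : ℕ → Fin b} {m : ℕ}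
    (hag : ∀ i, i < m → x i = y i) (hy : ∀ i, m ≤ i → y i = ⟨b - 1, by omega⟩) :
    toLex x ≤ toLex y :=
  lex_le_of_forall fun i _ => by
    rcases lt_or_ge i m with hi | hi
    · exact (hag i hi).le
    · rw [hy i hi, Fin.le_def]
      have := (x i).isLt; simp; omega

/-! ### cons and tail -/

def tl (x : ℕ → Fin b) : ℕ → Fin b := fun i => x (i + 1)

def cns (d : Fin b) (x : ℕ → Fin b) : ℕ → Fin b := fun i =>
  match i with
  | 0 => d
  | j + 1 => x j

@[simp] theorem cns_zero (d : Fin b) (x : ℕ → Fin b) : cns d x 0 = d := rfl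
@[simp] theorem cns_succ (d : Fin b) (x : ℕ → Fin b) (j : ℕ) : cns d x (j + 1) = x j := rfl
@[simp] theorem tl_cns (d : Fin b) (x : ℕ → Fin b) : tl (cns d x) = x := rfl

theorem cns_tl (x : ℕ → Fin b) : cns (x 0) (tl x) = x := by
  funext i; cases i <;> rfl

theorem cns_le_cns {d : Fin b} {x y : ℕ → Fin b} (h : toLex x ≤ toLex y) :
    toLex (cns d x) ≤ toLex (cns d y) := by
  rcases tLE_iff.mp h with ⟨n, hn, hlt⟩ | rfl
  · exact le_of_lt ⟨n + 1, fun m hm => by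
      cases m with
      | zero => rfl
      | succ j => exact hn j (by omega), hlt⟩
  · exact le_rfl

theorem cns_lt_cns_of_lt {d e : Fin b} (x y : ℕ → Fin b) (h : d < e) :
    toLex (cns d x) < toLex (cns e y) :=
  ⟨0, fun m hm => by omega, h⟩

theorem tl_le_tl {x y : ℕ → Fin b} (h0 : x 0 = y 0) (h : toLex x ≤ toLex y) :
    toLex (tl x) ≤ toLex (tl y) := by
  rcases tLE_iff.mp h with ⟨n, hn, hlt⟩ | rfl
  · cases n with
    | zero => exact absurd h0 hlt.ne
    | succ j =>
      exact le_of_lt ⟨j, fun m hm => hn (m + 1) (by omega), hlt⟩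
  · exact le_rfl

theorem le_cns_iff_tl {d : Fin b} {x y : ℕ → Fin b} (h0 : x 0 = d) :
    toLex x ≤ toLex (cns d y) ↔ toLex (tl x) ≤ toLex y := by
  constructor
  · intro h
    have := tl_le_tl (by rw [h0]; rfl) h
    simpa using this
  · intro h
    have := cns_le_cns (d := d) h
    rw [show cns d (tl x) = x from by rw [← h0]; exact cns_tl x] at this
    exact this

/-! ### lexicographic min / max and clamp -/

def lmin (x y : ℕ → Fin b) : ℕ → Fin b := ofLex (min (toLex x) (toLex y))
def lmax (x y : ℕ → Fin b) : ℕ → Fin b := ofLex (max (toLex x) (toLex y))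

@[simp] theorem toLex_lmin (x y : ℕ → Fin b) :
    toLex (lmin x y) = min (toLex x) (toLex y) := rfl
@[simp] theorem toLex_lmax (x y : ℕ → Fin b) :
    toLex (lmax x y) = max (toLex x) (toLex y) := rfl

theorem lmin_cases (x y : ℕ → Fin b) : lmin x y = x ∨ lmin x y = y := by
  rcases min_cases (toLex x) (toLex y) with ⟨h, _⟩ | ⟨h, _⟩
  · exact Or.inl (by exact_mod_cast h)
  · exact Or.inr (by exact_mod_cast h)

theorem lmax_cases (x y : ℕ → Fin b) : lmax x y = x ∨ lmax x y = y := by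
  rcases max_cases (toLex x) (toLex y) with ⟨h, _⟩ | ⟨h, _⟩
  · exact Or.inl (by exact_mod_cast h)
  · exact Or.inr (by exact_mod_cast h)

/-- the clamp of `z` into `[a, c]`. -/
def cl (a c z : ℕ → Fin b) : ℕ → Fin b := lmax a (lmin z c)

theorem le_cl (a c z : ℕ → Fin b) : toLex a ≤ toLex (cl a c z) := le_max_left _ _

theorem cl_le (a c z : ℕ → Fin b) (hac : toLex a ≤ toLex c) :
    toLex (cl a c z) ≤ toLex c := max_le hac (min_le_right _ _)

theorem cl_eq_self {a c z : ℕ → Fin b} (h1 : toLex a ≤ toLex z) (h2 : toLex z ≤ toLex c) :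
    cl a c z = z := by
  have : toLex (cl a c z) = toLex z := by
    unfold cl
    rw [toLex_lmax, toLex_lmin, min_eq_left h2, max_eq_right h1]
  exact_mod_cast this

theorem cl_mono {a c z z' : ℕ → Fin b} (h : toLex z ≤ toLex z') :
    toLex (cl a c z) ≤ toLex (cl a c z') :=
  max_le_max le_rfl (min_le_min h le_rfl)

/-- agreement transfer for lmin -/
theorem lmin_agree {x y c : ℕ → Fin b} {n : ℕ} (h : ∀ i, i < n → x i = y i) :
    ∀ i, i < n → lmin x c i = lmin y c i := by
  intro i hi
  rcases lmin_cases x c with h1 | h1 <;> rcases lmin_cases y c with h2 | h2 <;>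
    rw [h1, h2]
  · exact h i hi
  · have hxc : toLex x ≤ toLex c := by
      have : toLex (lmin x c) ≤ toLex c := by rw [toLex_lmin]; exact min_le_right _ _
      rwa [h1] at this
    have hcy : toLex c ≤ toLex y := by
      have : toLex (lmin y c) ≤ toLex y := by rw [toLex_lmin]; exact min_le_left _ _
      rwa [h2] at this
    exact (sandwich (m := n) h hxc hcy i hi).symm
  · have hyc : toLex y ≤ toLex c := by
      have : toLex (lmin y c) ≤ toLex c := by rw [toLex_lmin]; exact min_le_right _ _
      rwa [h2] at this
    have hcx : toLex c ≤ toLex x := by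
      have : toLex (lmin x c) ≤ toLex x := by rw [toLex_lmin]; exact min_le_left _ _
      rwa [h1] at this
    exact sandwich (m := n) (fun j hj => (h j hj).symm) hyc hcx i hi

theorem lmax_agree {x y a : ℕ → Fin b} {n : ℕ} (h : ∀ i, i < n → x i = y i) :
    ∀ i, i < n → lmax a x i = lmax a y i := by
  intro i hi
  rcases lmax_cases a x with h1 | h1 <;> rcases lmax_cases a y with h2 | h2 <;>
    rw [h1, h2]
  · -- h1 : lmax a x = a, h2 : lmax a y = y; goal a i = y i
    have hxa : toLex x ≤ toLex a := by
      have : toLex x ≤ toLex (lmax a x) := by rw [toLex_lmax]; exact le_max_right _ _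
      rwa [h1] at this
    have hay : toLex a ≤ toLex y := by
      have : toLex a ≤ toLex (lmax a y) := by rw [toLex_lmax]; exact le_max_left _ _
      rwa [h2] at this
    exact (sandwich (m := n) h hxa hay i hi).trans (h i hi)
  · -- h1 : lmax a x = x, h2 : lmax a y = a; goal x i = a i
    have hya : toLex y ≤ toLex a := by
      have : toLex y ≤ toLex (lmax a y) := by rw [toLex_lmax]; exact le_max_right _ _
      rwa [h2] at this
    have hax : toLex a ≤ toLex x := by
      have : toLex a ≤ toLex (lmax a x) := by rw [toLex_lmax]; exact le_max_left _ _
      rwa [h1] at this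
    exact (h i hi).trans
      (sandwich (m := n) (fun j hj => (h j hj).symm) hya hax i hi).symm
  · exact h i hi

theorem cl_agree {a c x y : ℕ → Fin b} {n : ℕ} (h : ∀ i, i < n → x i = y i) :
    ∀ i, i < n → cl a c x i = cl a c y i :=
  lmax_agree (lmin_agree h)

/-! ### topology -/

theorem isClopen_coord (m : ℕ) (v : Fin b) : IsClopen {z : ℕ → Fin b | z m = v} :=
  IsClopen.preimage (isClopen_discrete ({v} : Set (Fin b))) (continuous_apply m)

theorem isOpen_coord (m : ℕ) (v : Fin b) : IsOpen {z : ℕ → Fin b | z m = v} :=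
  (isClopen_coord m v).isOpen

theorem isClosed_coord (m : ℕ) (v : Fin b) : IsClosed {z : ℕ → Fin b | z m = v} :=
  (isClopen_coord m v).isClosed

theorem isClopen_cylcond (w : ℕ → Fin b) (n : ℕ) :
    IsClopen {z : ℕ → Fin b | (∀ m, m < n → z m = w m) ∧ w n < z n} := by
  have : {z : ℕ → Fin b | (∀ m, m < n → z m = w m) ∧ w n < z n} =
      (⋂ m ∈ Finset.range n, {z : ℕ → Fin b | z m = w m}) ∩
        ((fun z : ℕ → Fin b => z n) ⁻¹' (Set.Ioi (w n))) := by
    ext z; simp [Set.mem_iInter, Set.mem_setOf_eq]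
  rw [this]
  refine IsClopen.inter ?_ ?_
  · exact isClopen_biInter_finset (fun m _ => isClopen_coord m (w m))
  · exact IsClopen.preimage (isClopen_discrete _) (continuous_apply n)

theorem gt_set_eq (w : ℕ → Fin b) :
    {z : ℕ → Fin b | toLex w < toLex z} =
      ⋃ n, {z : ℕ → Fin b | (∀ m, m < n → z m = w m) ∧ w n < z n} := by
  ext z
  simp only [Set.mem_setOf_eq, Set.mem_iUnion]
  constructor
  · rintro ⟨n, hn, hlt⟩; exact ⟨n, fun m hm => (hn m hm).symm, hlt⟩
  · rintro ⟨n, hn, hlt⟩; exact ⟨n, fun m hm => (hn m hm).symm, hlt⟩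

theorem isOpen_gt (w : ℕ → Fin b) : IsOpen {z : ℕ → Fin b | toLex w < toLex z} := by
  rw [gt_set_eq]
  exact isOpen_iUnion fun n => (isClopen_cylcond w n).isOpen

theorem isClosed_le (w : ℕ → Fin b) : IsClosed {z : ℕ → Fin b | toLex z ≤ toLex w} := by
  have : {z : ℕ → Fin b | toLex z ≤ toLex w} = {z : ℕ → Fin b | toLex w < toLex z}ᶜ := by
    ext z; simp only [Set.mem_setOf_eq, Set.mem_compl_iff]; exact not_lt.symm
  rw [this]
  exact (isOpen_gt w).isClosed_compl

theorem isClosed_gt_of_evtop (hb : 2 ≤ b) (w : ℕ → Fin b) (N : ℕ)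
    (hN : ∀ i, N ≤ i → w i = ⟨b - 1, by omega⟩) :
    IsClosed {z : ℕ → Fin b | toLex w < toLex z} := by
  have : {z : ℕ → Fin b | toLex w < toLex z} =
      ⋃ n ∈ Finset.range N, {z : ℕ → Fin b | (∀ m, m < n → z m = w m) ∧ w n < z n} := by
    rw [gt_set_eq]
    ext z
    simp only [Set.mem_iUnion, Finset.mem_range, Set.mem_setOf_eq]
    constructor
    · rintro ⟨n, hn, hlt⟩
      refine ⟨n, ?_, hn, hlt⟩
      by_contra hc
      push_neg at hc
      rw [hN n hc] at hlt
      have := (z n).isLt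
      rw [Fin.lt_def] at hlt
      simp at hlt; omega
    · rintro ⟨n, _, hn, hlt⟩; exact ⟨n, hn, hlt⟩
  rw [this]
  exact Set.Finite.isClosed_biUnion (Finset.finite_toSet _)
    (fun n _ => (isClopen_cylcond w n).isClosed)

theorem isOpen_le_of_evtop (hb : 2 ≤ b) (w : ℕ → Fin b) (N : ℕ)
    (hN : ∀ i, N ≤ i → w i = ⟨b - 1, by omega⟩) :
    IsOpen {z : ℕ → Fin b | toLex z ≤ toLex w} := by
  have : {z : ℕ → Fin b | toLex z ≤ toLex w} = {z : ℕ → Fin b | toLex w < toLex z}ᶜ := by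
    ext z; simp only [Set.mem_setOf_eq, Set.mem_compl_iff]; exact not_lt.symm
  rw [this]
  exact (isClosed_gt_of_evtop hb w N hN).isOpen_compl

/-- cylinders are neighborhood basis: any open set contains a cylinder around its points. -/
theorem exists_cylinder_subset {U : Set (ℕ → Fin b)} (hU : IsOpen U) {x : ℕ → Fin b}
    (hx : x ∈ U) : ∃ N, ∀ y : ℕ → Fin b, (∀ i, i < N → y i = x i) → y ∈ U := by
  obtain ⟨I, u, hu, hsub⟩ := isOpen_pi_iff.mp hU x hx
  rcases I.bddAbove with ⟨N, hN⟩
  refine ⟨N + 1, fun y hy => hsub ?_⟩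
  intro i hi
  rw [hy i (by have := hN hi; omega)]
  exact (hu i hi).2

/-- continuity from nonexpansiveness with modulus. -/
theorem continuous_of_mod {K : ℕ} {f : (ℕ → Fin b) → (ℕ → Fin b)}
    (hf : ∀ n x y, (∀ i, i < n + K → x i = y i) → ∀ i, i < n → f x i = f y i) :
    Continuous f := by
  refine continuous_pi fun n => ?_
  refine IsLocallyConstant.continuous ?_
  rw [IsLocallyConstant.iff_exists_open]
  intro x
  refine ⟨⋂ m ∈ Finset.range (n + 1 + K), {z : ℕ → Fin b | z m = x m}, ?_, ?_, ?_⟩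
  · exact isOpen_biInter_finset fun m _ => isOpen_coord m (x m)
  · simp
  · intro y hy
    simp only [Set.mem_iInter, Finset.mem_range, Set.mem_setOf_eq] at hy
    exact hf (n + 1) y x (fun i hi => hy i hi) n (by omega)

/-! ### digits -/

theorem mod_pow_digit {b : ℕ} (hb : 0 < b) {k e : ℕ} (he : e < k) (i : ℕ) :
    i % b ^ k / b ^ e % b = i / b ^ e % b := by
  conv_rhs => rw [← Nat.div_add_mod i (b ^ k)]
  have h1 : b ^ k * (i / b ^ k) = b ^ e * (b ^ (k - e) * (i / b ^ k)) := by
    rw [← mul_assoc, ← pow_add]; congr 2; omega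
  rw [h1, Nat.mul_add_div (pow_pos hb e)]
  have h2 : b ^ (k - e) * (i / b ^ k) = b * (b ^ (k - e - 1) * (i / b ^ k)) := by
    rw [← mul_assoc]; congr 1
    rw [← pow_succ']; congr 1; omega
  rw [h2, add_comm, Nat.add_mul_mod_self_left]

theorem digit_surj {b : ℕ} (hb : 0 < b) (k : ℕ) (y : ℕ → ℕ) (hy : ∀ m, y m < b) :
    ∃ i, i < b ^ k ∧ ∀ m, m < k → i / b ^ (k - 1 - m) % b = y m := by
  induction k generalizing y with
  | zero => exact ⟨0, by simp, fun m hm => by omega⟩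
  | succ k IH =>
    obtain ⟨i', hi', hd⟩ := IH (fun m => y (m + 1)) (fun m => hy (m + 1))
    refine ⟨y 0 * b ^ k + i', ?_, ?_⟩
    · have h0 := hy 0
      have : y 0 * b ^ k + i' < (y 0 + 1) * b ^ k := by
        rw [add_mul, one_mul]; omega
      calc y 0 * b ^ k + i' < (y 0 + 1) * b ^ k := this
        _ ≤ b * b ^ k := by
            exact Nat.mul_le_mul_right _ (by omega)
        _ = b ^ (k + 1) := by rw [← pow_succ']
    · intro m hm
      cases m with
      | zero =>
        have he : k + 1 - 1 - 0 = k := by omega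
        rw [he, mul_comm, Nat.mul_add_div (pow_pos hb k),
          Nat.div_eq_of_lt hi', add_zero, Nat.mod_eq_of_lt (hy 0)]
      | succ m' =>
        have he : k + 1 - 1 - (m' + 1) = k - 1 - m' := by omega
        rw [he]
        have hlt : k - 1 - m' < k := by omega
        rw [← mod_pow_digit hb hlt, mul_comm, Nat.mul_add_mod, Nat.mod_eq_of_lt hi']
        exact hd m' (by omega)

theorem digit_lt {b : ℕ} (hb : 0 < b) (k : ℕ) {i j : ℕ} (hij : i < j) (hj : j < b ^ k) :
    ∃ m, m < k ∧ (∀ m', m' < m → i / b ^ (k - 1 - m') % b = j / b ^ (k - 1 - m') % b) ∧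
      i / b ^ (k - 1 - m) % b < j / b ^ (k - 1 - m) % b := by
  induction k generalizing i j with
  | zero => simp at hj; omega
  | succ k IH =>
    have hdle : i / b ^ k ≤ j / b ^ k := Nat.div_le_div_right hij.le
    have hjd : j / b ^ k < b :=
      Nat.div_lt_of_lt_mul (by rw [← pow_succ]; exact hj)
    have hid : i / b ^ k < b := by omega
    rcases lt_or_eq_of_le hdle with hlt | heq
    · refine ⟨0, by omega, fun m' hm' => by omega, ?_⟩
      have he : k + 1 - 1 - 0 = k := by omega
      rw [he, Nat.mod_eq_of_lt hid, Nat.mod_eq_of_lt hjd]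
      exact hlt
    · have hmod : i % b ^ k < j % b ^ k := by
        have h1 := Nat.div_add_mod i (b ^ k)
        have h2 := Nat.div_add_mod j (b ^ k)
        rw [heq] at h1
        omega
      obtain ⟨m, hm, hag, hd⟩ := IH hmod (Nat.mod_lt _ (pow_pos hb k))
      refine ⟨m + 1, by omega, ?_, ?_⟩
      · intro m' hm'
        cases m' with
        | zero =>
          have he : k + 1 - 1 - 0 = k := by omega
          rw [he, heq]
        | succ m'' =>
          have he : k + 1 - 1 - (m'' + 1) = k - 1 - m'' := by omega
          have hlt2 : k - 1 - m'' < k := by omega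
          rw [he, ← mod_pow_digit hb hlt2 i, ← mod_pow_digit hb hlt2 j]
          exact hag m'' (by omega)
      · have he : k + 1 - 1 - (m + 1) = k - 1 - m := by omega
        have hlt2 : k - 1 - m < k := by omega
        rw [he, ← mod_pow_digit hb hlt2 i, ← mod_pow_digit hb hlt2 j]
        exact hd

theorem digit_top {b : ℕ} (hb : 2 ≤ b) (k : ℕ) {i : ℕ} (hik : i < b ^ k)
    (htop : ∀ m, m < k → i / b ^ (k - 1 - m) % b = b - 1) : i = b ^ k - 1 := by
  induction k generalizing i with
  | zero => simp at hik ⊢; omega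
  | succ k IH =>
    have hlast : i % b = b - 1 := by
      have := htop k (by omega)
      have he : k + 1 - 1 - k = 0 := by omega
      rw [he, pow_zero, Nat.div_one] at this
      exact this
    have hidiv : i / b < b ^ k := by
      rw [Nat.div_lt_iff_lt_mul (by omega)]
      calc i < b ^ (k+1) := hik
        _ = b ^ k * b := by rw [pow_succ]
    have hdd : ∀ m, m < k → (i / b) / b ^ (k - 1 - m) % b = b - 1 := by
      intro m hm
      rw [Nat.div_div_eq_div_mul]
      have he : b * b ^ (k - 1 - m) = b ^ (k - m) := by
        rw [← pow_succ']; congr 1; omega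
      have he2 : k + 1 - 1 - m = k - m := by omega
      have := htop m (by omega)
      rw [he2] at this
      rw [he]; exact this
    have hdiv := IH hidiv hdd
    have h2 := Nat.div_add_mod i b
    have hbk : 0 < b ^ k := pow_pos (by omega) k
    have h5 : b * (b ^ k - 1) + b * 1 = b * b ^ k := by
      rw [← Nat.mul_add]; congr 1; omega
    have h6 : b ^ (k + 1) = b * b ^ k := pow_succ' b k
    rw [hdiv] at h2
    omega

/-! ### W and sEnum -/

theorem mem_W_iff {s : List (Fin b)} {x : ℕ → Fin b} :
    x ∈ W b s ↔ ∀ i, (hi : i < s.length) → x i = s.get ⟨i, hi⟩ := Iff.rfl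

theorem mem_W_sEnum (hb : 2 ≤ b) {k i : ℕ} {x : ℕ → Fin b} :
    x ∈ W b (sEnum b k (by omega) i) ↔ ∀ m, m < k → (x m : ℕ) = i / b ^ (k - 1 - m) % b := by
  unfold W sEnum
  simp only [Set.mem_setOf_eq, List.length_ofFn, List.get_ofFn]
  constructor
  · intro H m hm
    have := H m hm
    simp only [Fin.cast] at this
    rw [this]
  · intro H m hm
    have := H m hm
    exact Fin.ext (by simpa using this)

theorem W_lt_W (hb : 2 ≤ b) {k i j : ℕ} (hij : i < j) (hj : j < b ^ k)
    {x y : ℕ → Fin b} (hx : x ∈ W b (sEnum b k (by omega) i))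
    (hy : y ∈ W b (sEnum b k (by omega) j)) : toLex x < toLex y := by
  rw [mem_W_sEnum hb] at hx hy
  obtain ⟨m, hm, hag, hd⟩ := digit_lt (by omega : 0 < b) k hij hj
  refine ⟨m, fun m' hm' => ?_, ?_⟩
  · show x m' = y m'
    apply Fin.ext
    rw [hx m' (by omega), hy m' (by omega)]
    exact hag m' hm'
  · show x m < y m
    rw [Fin.lt_def, hx m hm, hy m hm]
    exact hd

theorem exists_W_index (hb : 2 ≤ b) (k : ℕ) (y : ℕ → Fin b) :
    ∃ i, i < b ^ k ∧ y ∈ W b (sEnum b k (by omega) i) := by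
  obtain ⟨i, hik, hd⟩ := digit_surj (by omega : 0 < b) k (fun m => (y m : ℕ))
    (fun m => (y m).isLt)
  exact ⟨i, hik, (mem_W_sEnum hb).mpr (fun m hm => (hd m hm).symm)⟩

theorem W_index_unique (hb : 2 ≤ b) {k i j : ℕ} (hi : i < b ^ k) (hj : j < b ^ k)
    {x : ℕ → Fin b} (hx : x ∈ W b (sEnum b k (by omega) i))
    (hy : x ∈ W b (sEnum b k (by omega) j)) (hk : 1 ≤ k) : i = j := by
  by_contra hne
  rcases Nat.lt_or_ge i j with hlt | hge
  · exact absurd rfl (W_lt_W hb hlt hj hx hy).ne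
  · have : j < i := by omega
    exact absurd rfl (W_lt_W hb this hi hy hx).ne

theorem top_W_index (hb : 2 ≤ b) {k i : ℕ} (hik : i < b ^ k)
    (h : top' hb ∈ W b (sEnum b k (by omega) i)) : i = b ^ k - 1 := by
  refine digit_top hb k hik ?_
  intro m hm
  have := (mem_W_sEnum hb).mp h m hm
  simpa [top'] using this.symm

/-- target interval endpoints associated to index `i` for `sEnum b k _ i`. -/
def loA (hb : 2 ≤ b) (k i : ℕ) : ℕ → Fin b := fun m =>
  if hm : m < k then ⟨i / b ^ (k - 1 - m) % b, Nat.mod_lt _ (by omega)⟩ else ⟨0, by omega⟩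

def hiA (hb : 2 ≤ b) (k i : ℕ) : ℕ → Fin b := fun m =>
  if hm : m < k then ⟨i / b ^ (k - 1 - m) % b, Nat.mod_lt _ (by omega)⟩
  else ⟨b - 1, by omega⟩

theorem loA_agree_hiA (hb : 2 ≤ b) (k i : ℕ) :
    ∀ m, m < k → loA hb k i m = hiA hb k i m := by
  intro m hm; simp [loA, hiA, hm]

theorem loA_le_hiA (hb : 2 ≤ b) (k i : ℕ) : toLex (loA hb k i) ≤ toLex (hiA hb k i) :=
  lex_le_pointwise fun m => by
    by_cases hm : m < k <;> simp [loA, hiA, hm, Fin.le_def] <;> omega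

theorem loA_mem_W (hb : 2 ≤ b) (k i : ℕ) : loA hb k i ∈ W b (sEnum b k (by omega) i) :=
  (mem_W_sEnum hb).mpr fun m hm => by simp [loA, hm]

theorem hiA_mem_W (hb : 2 ≤ b) (k i : ℕ) : hiA hb k i ∈ W b (sEnum b k (by omega) i) :=
  (mem_W_sEnum hb).mpr fun m hm => by simp [hiA, hm]

theorem loA_tail (hb : 2 ≤ b) (k i : ℕ) : ∀ m, k ≤ m → loA hb k i m = ⟨0, by omega⟩ := by
  intro m hm; simp [loA, Nat.not_lt.mpr hm]

theorem hiA_tail (hb : 2 ≤ b) (k i : ℕ) : ∀ m, k ≤ m → hiA hb k i m = ⟨b - 1, by omega⟩ := by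
  intro m hm; simp [hiA, Nat.not_lt.mpr hm]

theorem mem_W_iff_between (hb : 2 ≤ b) {k i : ℕ} {x : ℕ → Fin b} :
    x ∈ W b (sEnum b k (by omega) i) ↔
      toLex (loA hb k i) ≤ toLex x ∧ toLex x ≤ toLex (hiA hb k i) := by
  constructor
  · intro hx
    have hd := (mem_W_sEnum hb).mp hx
    constructor
    · refine le_of_agree_bot_tail hb (m := k) ?_ (loA_tail hb k i)
      intro m hm
      apply Fin.ext
      simp [loA, hm, (hd m hm)]
    · refine le_of_agree_top_tail hb (m := k) ?_ (hiA_tail hb k i)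
      intro m hm
      apply Fin.ext
      simp [hiA, hm, (hd m hm)]
  · rintro ⟨h1, h2⟩
    refine (mem_W_sEnum hb).mpr fun m hm => ?_
    have := sandwich (loA_agree_hiA hb k i) h1 h2 m hm
    rw [this]
    simp [loA, hm]

/-! ### the recursive surjection construction -/

def bump (hb : 2 ≤ b) (a : ℕ → Fin b) : ℕ → Fin b :=
  cns ⟨min ((a 0 : ℕ) + 1) (b - 1), by omega⟩ (bot' hb)

theorem bump_zero (hb : 2 ≤ b) (a : ℕ → Fin b) (h : (a 0 : ℕ) + 1 ≤ b - 1) :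
    ((bump hb a) 0 : ℕ) = (a 0 : ℕ) + 1 := by
  simp [bump]; omega

theorem bump_tail (hb : 2 ≤ b) (a : ℕ → Fin b) :
    ∀ i, 1 ≤ i → bump hb a i = ⟨0, by omega⟩ := by
  intro i hi
  match i, hi with
  | j + 1, _ => rfl

def SG (hb : 2 ≤ b) (R : (ℕ → Fin b) → (ℕ → Fin b) → (ℕ → Fin b) → ℕ → Fin b) :
    ℕ → (ℕ → Fin b) → (ℕ → Fin b) → (ℕ → Fin b) → ℕ → Fin b
  | 0, a, c, z => R (tl a) (tl c) (tl (cl a c z))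
  | g + 1, a, c, z =>
      if (cl a c z) 0 = a 0 then
        cns ⟨0, by omega⟩ (R (tl a) (top' hb) (tl (cl a c z)))
      else lmax (cns ⟨1, by omega⟩ (bot' hb)) (SG hb R g (bump hb a) c z)

def SF (hb : 2 ≤ b) : ℕ → (ℕ → Fin b) → (ℕ → Fin b) → (ℕ → Fin b) → ℕ → Fin b
  | 0, _, _, z => z
  | n + 1, a, c, z => SG hb (SF hb n) ((c 0 : ℕ) - (a 0 : ℕ)) a c z

/-- modulus of continuity for `SG`. -/
theorem SG_mod (hb : 2 ≤ b) {K : ℕ}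
    {R : (ℕ → Fin b) → (ℕ → Fin b) → (ℕ → Fin b) → ℕ → Fin b}
    (hR : ∀ a' c' : ℕ → Fin b, ∀ m x y, (∀ i, i < m + K → x i = y i) →
      ∀ i, i < m → R a' c' x i = R a' c' y i)
    (g : ℕ) (a c : ℕ → Fin b) :
    ∀ m x y, (∀ i, i < m + (K + 1) → x i = y i) →
      ∀ i, i < m → SG hb R g a c x i = SG hb R g a c y i := by
  induction g generalizing a with
  | zero =>
    intro m x y hxy i him
    simp only [SG]
    have h1 : ∀ i, i < m + K → tl (cl a c x) i = tl (cl a c y) i := by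
      intro i hi
      exact cl_agree hxy (i + 1) (by omega)
    exact hR (tl a) (tl c) m _ _ h1 i him
  | succ g IH =>
    intro m x y hxy i him
    have hm1 : 0 < m := by omega
    have hcl0 : cl a c x 0 = cl a c y 0 := cl_agree hxy 0 (by omega)
    simp only [SG]
    by_cases hcond : cl a c x 0 = a 0
    · rw [if_pos hcond, if_pos (hcl0 ▸ hcond)]
      cases i with
      | zero => rfl
      | succ j =>
        simp only [cns_succ]
        have h1 : ∀ i', i' < (m - 1) + K → tl (cl a c x) i' = tl (cl a c y) i' := by
          intro i' hi'
          exact cl_agree hxy (i' + 1) (by omega)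
        exact hR (tl a) (top' hb) (m - 1) _ _ h1 j (by omega)
    · rw [if_neg hcond, if_neg (hcl0 ▸ hcond)]
      exact lmax_agree (IH (bump hb a) m x y hxy) i him

/-- monotonicity for `SG`. -/
theorem SG_mono (hb : 2 ≤ b)
    {R : (ℕ → Fin b) → (ℕ → Fin b) → (ℕ → Fin b) → ℕ → Fin b}
    (hR : ∀ a' c' : ℕ → Fin b, toLex a' ≤ toLex c' → ∀ z z', toLex z ≤ toLex z' →
      toLex (R a' c' z) ≤ toLex (R a' c' z'))
    (g : ℕ) (a c : ℕ → Fin b) (hac : toLex a ≤ toLex c)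
    (hg : (c 0 : ℕ) - (a 0 : ℕ) = g) :
    ∀ z z', toLex z ≤ toLex z' → toLex (SG hb R g a c z) ≤ toLex (SG hb R g a c z') := by
  induction g generalizing a with
  | zero =>
    intro z z' hzz
    have ha0 : (a 0 : ℕ) ≤ (c 0 : ℕ) := le_at hac 0 (by omega)
    have h00 : a 0 = c 0 := Fin.ext (by omega)
    have ht : toLex (cl a c z) ≤ toLex (cl a c z') := cl_mono hzz
    have hz0 : cl a c z 0 = a 0 :=
      sandwich (m := 1) (fun i hi => by rw [(by omega : i = 0)]; exact h00)
        (le_cl a c z) (cl_le a c z hac) 0 (by omega)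
    have hz0' : cl a c z' 0 = a 0 :=
      sandwich (m := 1) (fun i hi => by rw [(by omega : i = 0)]; exact h00)
        (le_cl a c z') (cl_le a c z' hac) 0 (by omega)
    simp only [SG]
    exact hR (tl a) (tl c) (tl_le_tl h00 hac) _ _
      (tl_le_tl (hz0.trans hz0'.symm) ht)
  | succ g IH =>
    intro z z' hzz
    have ha0 : (a 0 : ℕ) ≤ (c 0 : ℕ) := le_at hac 0 (by omega)
    have ha0c0 : (a 0 : ℕ) < (c 0 : ℕ) := by omega
    have hb1 : (a 0 : ℕ) + 1 ≤ b - 1 := by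
      have := (c 0).isLt; omega
    have hbumpc : toLex (bump hb a) ≤ toLex c := by
      refine lex_le_of_forall fun i hag => ?_
      cases i with
      | zero =>
        rw [Fin.le_def, bump_zero hb a hb1]; omega
      | succ j =>
        rw [bump_tail hb a (j+1) (by omega), Fin.le_def]
        simp
    have hgbump : (c 0 : ℕ) - ((bump hb a) 0 : ℕ) = g := by
      rw [bump_zero hb a hb1]; omega
    have ht : toLex (cl a c z) ≤ toLex (cl a c z') := cl_mono hzz
    simp only [SG]
    by_cases h1 : cl a c z 0 = a 0 <;> by_cases h2 : cl a c z' 0 = a 0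
    · rw [if_pos h1, if_pos h2]
      exact cns_le_cns (hR (tl a) (top' hb) (le_top' hb (tl a)) _ _
        (tl_le_tl (h1.trans h2.symm) ht))
    · rw [if_pos h1, if_neg h2]
      have hlt : toLex (cns (⟨0, by omega⟩ : Fin b) (R (tl a) (top' hb) (tl (cl a c z)))) <
          toLex (cns (⟨1, by omega⟩ : Fin b) (bot' hb)) :=
        cns_lt_cns_of_lt _ _ (by simp [Fin.lt_def])
      refine le_trans (le_of_lt hlt) ?_
      rw [toLex_lmax]; exact le_max_left _ _
    · exfalso
      have hle1 : (a 0 : ℕ) ≤ (cl a c z 0 : ℕ) := by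
        have := le_at (le_cl a c z) 0 (by omega); rwa [Fin.le_def] at this
      have hle2 : (cl a c z 0 : ℕ) ≤ (cl a c z' 0 : ℕ) := by
        have := le_at ht 0 (by omega); rwa [Fin.le_def] at this
      have : (cl a c z' 0 : ℕ) = (a 0 : ℕ) := by rw [h2]
      exact h1 (Fin.ext (by omega))
    · rw [if_neg h1, if_neg h2]
      rw [toLex_lmax, toLex_lmax]
      exact max_le_max le_rfl (IH (bump hb a) hbumpc hgbump z z' hzz)

/-- surjectivity from the interval for `SG`. -/
theorem SG_surj (hb : 2 ≤ b) {n : ℕ}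
    {R : (ℕ → Fin b) → (ℕ → Fin b) → (ℕ → Fin b) → ℕ → Fin b}
    (hR : ∀ a' c' : ℕ → Fin b, toLex a' ≤ toLex c' →
      (∀ i, n ≤ i → a' i = ⟨0, by omega⟩) → (∀ i, n ≤ i → c' i = ⟨b - 1, by omega⟩) →
      ∀ y, ∃ z, toLex a' ≤ toLex z ∧ toLex z ≤ toLex c' ∧ R a' c' z = y)
    (g : ℕ) (a c : ℕ → Fin b) (hac : toLex a ≤ toLex c)
    (hg : (c 0 : ℕ) - (a 0 : ℕ) = g)
    (hA : ∀ i, n + 1 ≤ i → a i = ⟨0, by omega⟩)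
    (hC : ∀ i, n + 1 ≤ i → c i = ⟨b - 1, by omega⟩) :
    ∀ y, ∃ z, toLex a ≤ toLex z ∧ toLex z ≤ toLex c ∧ SG hb R g a c z = y := by
  induction g generalizing a with
  | zero =>
    intro y
    have ha0 : (a 0 : ℕ) ≤ (c 0 : ℕ) := le_at hac 0 (by omega)
    have h00 : a 0 = c 0 := Fin.ext (by omega)
    obtain ⟨z', h1, h2, h3⟩ := hR (tl a) (tl c) (tl_le_tl h00 hac)
      (fun i hi => hA (i + 1) (by omega)) (fun i hi => hC (i + 1) (by omega)) y
    refine ⟨cns (a 0) z', ?_, ?_, ?_⟩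
    · conv_lhs => rw [← cns_tl a]
      exact cns_le_cns h1
    · conv_rhs => rw [← cns_tl c]
      rw [← h00]
      exact cns_le_cns h2
    · have hcl : cl a c (cns (a 0) z') = cns (a 0) z' := by
        apply cl_eq_self
        · conv_lhs => rw [← cns_tl a]
          exact cns_le_cns h1
        · conv_rhs => rw [← cns_tl c]
          rw [← h00]
          exact cns_le_cns h2
      simp only [SG, hcl, tl_cns]
      exact h3
  | succ g IH =>
    intro y
    have ha0 : (a 0 : ℕ) ≤ (c 0 : ℕ) := le_at hac 0 (by omega)
    have ha0c0 : (a 0 : ℕ) < (c 0 : ℕ) := by omega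
    have hb1 : (a 0 : ℕ) + 1 ≤ b - 1 := by
      have := (c 0).isLt; omega
    by_cases hy0 : (y 0 : ℕ) = 0
    · obtain ⟨z', h1, h2, h3⟩ := hR (tl a) (top' hb) (le_top' hb (tl a))
        (fun i hi => hA (i + 1) (by omega)) (fun i hi => rfl) (tl y)
      refine ⟨cns (a 0) z', ?_, ?_, ?_⟩
      · conv_lhs => rw [← cns_tl a]
        exact cns_le_cns h1
      · exact le_of_lt ⟨0, fun m hm => by omega, by
          show cns (a 0) z' 0 < c 0
          rw [Fin.lt_def]; simpa using ha0c0⟩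
      · have hale : toLex a ≤ toLex (cns (a 0) z') := by
          conv_lhs => rw [← cns_tl a]
          exact cns_le_cns h1
        have hcle : toLex (cns (a 0) z') ≤ toLex c :=
          le_of_lt ⟨0, fun m hm => by omega, by
            show cns (a 0) z' 0 < c 0
            rw [Fin.lt_def]; simpa using ha0c0⟩
        have hcl : cl a c (cns (a 0) z') = cns (a 0) z' := cl_eq_self hale hcle
        simp only [SG, hcl, cns_zero, if_pos rfl, tl_cns, h3]
        funext i
        cases i with
        | zero => exact Fin.ext (by simpa using hy0.symm)
        | succ j => rfl
    · have hbumpc : toLex (bump hb a) ≤ toLex c := by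
        refine lex_le_of_forall fun i hag => ?_
        cases i with
        | zero =>
          rw [Fin.le_def, bump_zero hb a hb1]; omega
        | succ j =>
          rw [bump_tail hb a (j+1) (by omega), Fin.le_def]
          simp
      have hgbump : (c 0 : ℕ) - ((bump hb a) 0 : ℕ) = g := by
        rw [bump_zero hb a hb1]; omega
      obtain ⟨z, hz1, hz2, hz3⟩ := IH (bump hb a) hbumpc hgbump
        (fun i hi => bump_tail hb a i (by omega)) hC y
      have habump : toLex a ≤ toLex (bump hb a) :=
        le_of_lt ⟨0, fun m hm => by omega, by
          show a 0 < bump hb a 0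
          rw [Fin.lt_def, bump_zero hb a hb1]; omega⟩
      have haz : toLex a ≤ toLex z := le_trans habump hz1
      have hcl : cl a c z = z := cl_eq_self haz hz2
      have hz0 : ¬ (cl a c z) 0 = a 0 := by
        rw [hcl]
        intro hcc
        have := le_at hz1 0 (by omega)
        rw [Fin.le_def, bump_zero hb a hb1, hcc] at this
        omega
      refine ⟨z, haz, hz2, ?_⟩
      simp only [SG, if_neg hz0, hz3]
      have hle : toLex (cns (⟨1, by omega⟩ : Fin b) (bot' hb)) ≤ toLex y := by
        refine lex_le_of_forall fun i hag => ?_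
        cases i with
        | zero => rw [Fin.le_def]; simp; omega
        | succ j => rw [Fin.le_def]; simp [bot']
      have : toLex (lmax (cns (⟨1, by omega⟩ : Fin b) (bot' hb)) y) = toLex y := by
        rw [toLex_lmax]; exact max_eq_right hle
      exact_mod_cast this

/-- modulus, monotonicity, continuity and surjectivity for `SF`. -/
theorem SF_mod (hb : 2 ≤ b) (n : ℕ) (a c : ℕ → Fin b) :
    ∀ m x y, (∀ i, i < m + n → x i = y i) →
      ∀ i, i < m → SF hb n a c x i = SF hb n a c y i := by
  induction n generalizing a c with
  | zero => intro m x y hxy i him; simpa [SF] using hxy i (by omega)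
  | succ n IH =>
    intro m x y hxy i him
    exact SG_mod hb (fun a' c' => IH a' c') _ a c m x y hxy i him

theorem SF_cont (hb : 2 ≤ b) (n : ℕ) (a c : ℕ → Fin b) :
    Continuous (SF hb n a c) :=
  continuous_of_mod (K := n) (SF_mod hb n a c)

theorem SF_mono (hb : 2 ≤ b) (n : ℕ) :
    ∀ a c : ℕ → Fin b, toLex a ≤ toLex c → ∀ z z', toLex z ≤ toLex z' →
      toLex (SF hb n a c z) ≤ toLex (SF hb n a c z') := by
  induction n with
  | zero => intro a c _ z z' h; simpa [SF] using h
  | succ n IH =>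
    intro a c hac z z' h
    exact SG_mono hb IH _ a c hac rfl z z' h

theorem SF_surj (hb : 2 ≤ b) (n : ℕ) :
    ∀ a c : ℕ → Fin b, toLex a ≤ toLex c →
      (∀ i, n ≤ i → a i = ⟨0, by omega⟩) → (∀ i, n ≤ i → c i = ⟨b - 1, by omega⟩) →
      ∀ y, ∃ z, toLex a ≤ toLex z ∧ toLex z ≤ toLex c ∧ SF hb n a c z = y := by
  induction n with
  | zero =>
    intro a c hac hA hC y
    refine ⟨y, ?_, ?_, rfl⟩
    · exact lex_le_pointwise fun i => by rw [hA i (by omega)]; exact Fin.mk_le_of_le_val (by omega)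
    · exact lex_le_pointwise fun i => by
        rw [hC i (by omega), Fin.le_def]
        have := (y i).isLt; simp; omega
  | succ n IH =>
    intro a c hac hA hC y
    exact SG_surj hb IH _ a c hac rfl hA hC y

/-! ### successor of an eventually-top sequence -/

def scOne (hb : 2 ≤ b) (x : ℕ → Fin b) (p : ℕ) : ℕ → Fin b := fun m =>
  if m < p then x m
  else if m = p then ⟨min ((x p : ℕ) + 1) (b - 1), by omega⟩
  else ⟨0, by omega⟩

theorem scOne_pivot (hb : 2 ≤ b) (x : ℕ → Fin b) (p : ℕ) (hp1 : (x p : ℕ) < b - 1) :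
    (scOne hb x p p : ℕ) = (x p : ℕ) + 1 := by
  simp [scOne]; omega

theorem scOne_lt_pivot (hb : 2 ≤ b) (x : ℕ → Fin b) {p m : ℕ} (hm : m < p) :
    scOne hb x p m = x m := by simp [scOne, hm]

theorem scOne_tail (hb : 2 ≤ b) (x : ℕ → Fin b) {p m : ℕ} (hm : p < m) :
    scOne hb x p m = ⟨0, by omega⟩ := by
  have h1 : ¬ m < p := by omega
  have h2 : ¬ m = p := by omega
  simp [scOne, h1, h2]

theorem lt_scOne (hb : 2 ≤ b) (x : ℕ → Fin b) (p : ℕ) (hp1 : (x p : ℕ) < b - 1) :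
    toLex x < toLex (scOne hb x p) := by
  refine ⟨p, fun m hm => (scOne_lt_pivot hb x hm).symm, ?_⟩
  show x p < scOne hb x p p
  rw [Fin.lt_def, scOne_pivot hb x p hp1]
  omega

theorem scOne_le_of_lt (hb : 2 ≤ b) (x : ℕ → Fin b) (p : ℕ) (hp1 : (x p : ℕ) < b - 1)
    (hp2 : ∀ m, p < m → x m = ⟨b - 1, by omega⟩) (z : ℕ → Fin b)
    (h : toLex x < toLex z) : toLex (scOne hb x p) ≤ toLex z := by
  obtain ⟨n, hn, hlt⟩ := h
  have hn' : ∀ m, m < n → x m = z m := fun m hm => hn m hm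
  have hlt' : x n < z n := hlt
  have hnp : n ≤ p := by
    by_contra hc
    push_neg at hc
    have h2 := hp2 n hc
    rw [Fin.lt_def, h2] at hlt'
    have := (z n).isLt
    simp at hlt'
    omega
  rcases lt_or_eq_of_le hnp with hnl | rfl
  · refine le_of_lt ⟨n, fun m hm => ?_, ?_⟩
    · show scOne hb x p m = z m
      rw [scOne_lt_pivot hb x (lt_trans hm hnl)]
      exact hn' m hm
    · show scOne hb x p n < z n
      rw [scOne_lt_pivot hb x hnl]
      exact hlt'
  · refine lex_le_of_forall fun m hag => ?_
    rcases lt_trichotomy m n with hm | rfl | hm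
    · rw [scOne_lt_pivot hb x hm, hn' m hm]
    · rw [Fin.le_def, scOne_pivot hb x _ hp1]
      rw [Fin.lt_def] at hlt'
      omega
    · rw [scOne_tail hb x hm, Fin.le_def]
      simp

/-! ### the glued function -/

def IzF (l : ℕ) (ww : ℕ → ℕ → Fin b) (z : ℕ → Fin b) : ℕ :=
  Nat.find (⟨l, Or.inl le_rfl⟩ : ∃ i, l ≤ i ∨ toLex z ≤ toLex (ww i))

theorem IzF_le_self (l : ℕ) (ww : ℕ → ℕ → Fin b) (z : ℕ → Fin b) : IzF l ww z ≤ l :=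
  Nat.find_le (Or.inl le_rfl)

theorem IzF_spec (l : ℕ) (ww : ℕ → ℕ → Fin b) (z : ℕ → Fin b) :
    l ≤ IzF l ww z ∨ toLex z ≤ toLex (ww (IzF l ww z)) :=
  Nat.find_spec (⟨l, Or.inl le_rfl⟩ : ∃ i, l ≤ i ∨ toLex z ≤ toLex (ww i))

theorem IzF_min {l : ℕ} {ww : ℕ → ℕ → Fin b} {z : ℕ → Fin b} {j : ℕ}
    (hj : j < IzF l ww z) : j < l ∧ toLex (ww j) < toLex z := by
  have := Nat.find_min (⟨l, Or.inl le_rfl⟩ : ∃ i, l ≤ i ∨ toLex z ≤ toLex (ww i)) hj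
  push_neg at this
  exact ⟨by omega, this.2⟩

theorem IzF_le_of {l : ℕ} {ww : ℕ → ℕ → Fin b} {z : ℕ → Fin b} {i : ℕ}
    (h : i = l ∨ toLex z ≤ toLex (ww i)) : IzF l ww z ≤ i := by
  refine Nat.find_le ?_
  rcases h with rfl | h
  · exact Or.inl le_rfl
  · exact Or.inr h

theorem IzF_mono {l : ℕ} {ww : ℕ → ℕ → Fin b} {x y : ℕ → Fin b}
    (h : toLex x ≤ toLex y) : IzF l ww x ≤ IzF l ww y :=
  Nat.find_mono fun n hn => hn.imp id (le_trans h)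

def loF (hb : 2 ≤ b) (ww : ℕ → ℕ → Fin b) (piv : ℕ → ℕ) (i : ℕ) : ℕ → Fin b :=
  if i = 0 then bot' hb else scOne hb (ww (i - 1)) (piv (i - 1))

def NfF (piv M : ℕ → ℕ) (i : ℕ) : ℕ :=
  max (if i = 0 then 0 else piv (i - 1) + 1) (M i)

def GF (hb : 2 ≤ b) (k l : ℕ) (ww : ℕ → ℕ → Fin b) (piv M : ℕ → ℕ)
    (z : ℕ → Fin b) : ℕ → Fin b :=
  cl (loA hb k (IzF l ww z)) (hiA hb k (IzF l ww z))
    (SF hb (NfF piv M (IzF l ww z)) (loF hb ww piv (IzF l ww z)) (ww (IzF l ww z)) z)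

theorem exists_glue (hb : 2 ≤ b) (k l : ℕ) (hk : 1 ≤ k) (hl : l = b ^ k - 1)
    (w : ℕ → ℕ → Fin b)
    (Hmono : ∀ i j, i < j → j < l → toLex (w i) < toLex (w j))
    (Htail : ∀ i, i < l → ∃ M, ∀ m, M ≤ m → w i m = ⟨b - 1, by omega⟩)
    (Hne : ∀ i, i < l → w i ≠ top' hb) :
    ∃ g : (ℕ → Fin b) → (ℕ → Fin b), CSur b g ∧ ∀ i, i < l → ∀ z,
      (g z ∈ W b (sEnum b k (by omega) i) ↔
        toLex z ≤ toLex (w i) ∧ ∀ j, j < i → toLex (w j) < toLex z) := by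
  classical
  have hbk2 : 2 ≤ b ^ k := le_trans hb (Nat.le_self_pow (by omega) b)
  have hlk : b ^ k = l + 1 := by omega
  have hl1 : 1 ≤ l := by omega
  set ww : ℕ → ℕ → Fin b := fun i => if i < l then w i else top' hb with hwwdef
  have hwwl : ∀ i, i < l → ww i = w i := fun i h => by simp [hwwdef, h]
  have hwwt : ∀ i, l ≤ i → ww i = top' hb := fun i h => by
    simp [hwwdef, show ¬ i < l by omega]
  have Hmono2 : ∀ i j, i < j → j ≤ l → toLex (ww i) < toLex (ww j) := by
    intro i j hij hjl
    rcases lt_or_eq_of_le hjl with hjl' | rfl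
    · rw [hwwl i (by omega), hwwl j hjl']
      exact Hmono i j hij hjl'
    · rw [hwwl i hij, hwwt j le_rfl]
      refine lt_of_le_of_ne (le_top' hb _) (fun he => Hne i hij ?_)
      exact_mod_cast he
  have HtailM : ∀ i, ∃ Mi, ∀ m, Mi ≤ m → ww i m = ⟨b - 1, by omega⟩ := by
    intro i
    by_cases h : i < l
    · obtain ⟨Mi, hMi⟩ := Htail i h
      exact ⟨Mi, fun m hm => by rw [hwwl i h]; exact hMi m hm⟩
    · exact ⟨0, fun m _ => by rw [hwwt i (by omega)]; rfl⟩
  choose M hM using HtailM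
  have Hpiv : ∀ i, ∃ p, i < l →
      ((ww i p : ℕ) < b - 1 ∧ ∀ m, p < m → ww i m = ⟨b - 1, by omega⟩) := by
    intro i
    by_cases h : i < l
    · have hne : ww i ≠ top' hb := by rw [hwwl i h]; exact Hne i h
      have hex : ∃ m, ¬ ((ww i m : ℕ) = b - 1) := by
        by_contra hc
        push_neg at hc
        exact hne (funext fun m => Fin.ext (by simpa [top'] using hc m))
      obtain ⟨m₀, hm₀⟩ := hex
      have hm₀M : m₀ ≤ M i := by
        by_contra hc
        push_neg at hc
        exact hm₀ (by rw [hM i m₀ (by omega)])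
      refine ⟨Nat.findGreatest (fun m => ¬ ((ww i m : ℕ) = b - 1)) (M i), fun _ => ⟨?_, ?_⟩⟩
      · have hspec := Nat.findGreatest_spec (P := fun m => ¬ ((ww i m : ℕ) = b - 1)) hm₀M hm₀
        have := (ww i (Nat.findGreatest (fun m => ¬ ((ww i m : ℕ) = b - 1)) (M i))).isLt
        omega
      · intro m hm
        apply Fin.ext
        show (ww i m : ℕ) = b - 1
        by_cases hmM : m ≤ M i
        · have := Nat.findGreatest_is_greatest hm hmM
          omega
        · rw [hM i m (by omega)]
    · exact ⟨0, fun h' => absurd h' h⟩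
  choose piv hpiv using Hpiv
  have hpiv1 : ∀ i, i < l → (ww i (piv i) : ℕ) < b - 1 := fun i h => (hpiv i h).1
  have hpiv2 : ∀ i, i < l → ∀ m, piv i < m → ww i m = ⟨b - 1, by omega⟩ :=
    fun i h => (hpiv i h).2
  have hlo0 : loF hb ww piv 0 = bot' hb := by simp [loF]
  have hlos : ∀ i, 1 ≤ i → loF hb ww piv i = scOne hb (ww (i - 1)) (piv (i - 1)) := by
    intro i h
    rw [loF, if_neg (by omega)]
  have hlole : ∀ i, i ≤ l → toLex (loF hb ww piv i) ≤ toLex (ww i) := by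
    intro i hil
    rcases Nat.eq_zero_or_pos i with rfl | hi1
    · rw [hlo0]; exact bot'_le hb _
    · rw [hlos i hi1]
      exact scOne_le_of_lt hb _ _ (hpiv1 (i - 1) (by omega)) (hpiv2 (i - 1) (by omega)) _
        (Hmono2 (i - 1) i (by omega) hil)
  have hlotail : ∀ i m, NfF piv M i ≤ m → loF hb ww piv i m = ⟨0, by omega⟩ := by
    intro i m hm
    rcases Nat.eq_zero_or_pos i with rfl | hi1
    · rw [hlo0]; rfl
    · rw [hlos i hi1]
      refine scOne_tail hb _ ?_
      have : piv (i - 1) + 1 ≤ NfF piv M i := by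
        rw [NfF, if_neg (by omega)]; exact le_max_left _ _
      omega
  have hhitail : ∀ i m, NfF piv M i ≤ m → ww i m = ⟨b - 1, by omega⟩ := by
    intro i m hm
    refine hM i m ?_
    have : M i ≤ NfF piv M i := le_max_right _ _
    omega
  have hmem1 : ∀ z, toLex (loF hb ww piv (IzF l ww z)) ≤ toLex z := by
    intro z
    rcases Nat.eq_zero_or_pos (IzF l ww z) with h0 | h1
    · rw [h0, hlo0]; exact bot'_le hb z
    · rw [hlos _ h1]
      have hj := IzF_min (l := l) (ww := ww) (z := z) (j := IzF l ww z - 1) (by omega)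
      exact scOne_le_of_lt hb _ _ (hpiv1 _ hj.1) (hpiv2 _ hj.1) z hj.2
  have hmem2 : ∀ z, toLex z ≤ toLex (ww (IzF l ww z)) := by
    intro z
    rcases lt_or_eq_of_le (IzF_le_self l ww z) with h | h
    · exact (IzF_spec l ww z).resolve_left (by omega)
    · rw [h, hwwt l le_rfl]
      exact le_top' hb z
  have hIzeq : ∀ i, i ≤ l → ∀ z, toLex (loF hb ww piv i) ≤ toLex z →
      toLex z ≤ toLex (ww i) → IzF l ww z = i := by
    intro i hil z hlz hzw
    refine le_antisymm (IzF_le_of ?_) ?_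
    · rcases lt_or_eq_of_le hil with h | h
      · exact Or.inr hzw
      · exact Or.inl h
    · by_contra hc
      push_neg at hc
      have h1 : 1 ≤ i := by omega
      have hzw2 : toLex z ≤ toLex (ww (IzF l ww z)) := hmem2 z
      have hwchain : toLex (ww (IzF l ww z)) ≤ toLex (ww (i - 1)) := by
        rcases lt_or_eq_of_le (show IzF l ww z ≤ i - 1 by omega) with h | h
        · exact (Hmono2 _ _ h (by omega)).le
        · rw [h]
      have hlt : toLex (ww (i - 1)) < toLex z := by
        rw [hlos i h1] at hlz
        exact lt_of_lt_of_le (lt_scOne hb _ _ (hpiv1 (i - 1) (by omega))) hlz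
      exact absurd (le_trans hzw2 hwchain) (not_le.mpr hlt)
  have hG_piece : ∀ z, GF hb k l ww piv M z ∈ W b (sEnum b k (by omega) (IzF l ww z)) := by
    intro z
    refine (mem_W_iff_between hb).mpr ⟨?_, ?_⟩
    · exact le_cl _ _ _
    · exact cl_le _ _ _ (loA_le_hiA hb k _)
  have hsurj : Function.Surjective (GF hb k l ww piv M) := by
    intro y
    obtain ⟨iy, hiyk, hyW⟩ := exists_W_index hb k y
    have hiyl : iy ≤ l := by omega
    obtain ⟨z, hz1, hz2, hz3⟩ := SF_surj hb (NfF piv M iy) (loF hb ww piv iy) (ww iy)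
      (hlole iy hiyl) (fun m hm => hlotail iy m hm) (fun m hm => hhitail iy m hm) y
    have hIz : IzF l ww z = iy := hIzeq iy hiyl z hz1 hz2
    refine ⟨z, ?_⟩
    show cl (loA hb k (IzF l ww z)) (hiA hb k (IzF l ww z))
      (SF hb (NfF piv M (IzF l ww z)) (loF hb ww piv (IzF l ww z)) (ww (IzF l ww z)) z) = y
    rw [hIz, hz3]
    exact cl_eq_self ((mem_W_iff_between hb).mp hyW).1 ((mem_W_iff_between hb).mp hyW).2
  have hmono : ∀ x y, toLex x ≤ toLex y →
      toLex (GF hb k l ww piv M x) ≤ toLex (GF hb k l ww piv M y) := by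
    intro x y hxy
    have hIle : IzF l ww x ≤ IzF l ww y := IzF_mono hxy
    rcases lt_or_eq_of_le hIle with hlt | heq
    · refine le_of_lt (W_lt_W hb hlt ?_ (hG_piece x) (hG_piece y))
      have := IzF_le_self l ww y
      omega
    · show toLex (cl (loA hb k (IzF l ww x)) (hiA hb k (IzF l ww x))
          (SF hb (NfF piv M (IzF l ww x)) (loF hb ww piv (IzF l ww x)) (ww (IzF l ww x)) x)) ≤
        toLex (cl (loA hb k (IzF l ww y)) (hiA hb k (IzF l ww y))
          (SF hb (NfF piv M (IzF l ww y)) (loF hb ww piv (IzF l ww y)) (ww (IzF l ww y)) y))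
      rw [← heq]
      exact cl_mono (SF_mono hb _ _ _ (hlole _ (IzF_le_self l ww x)) x y hxy)
  have hcont : Continuous (GF hb k l ww piv M) := by
    rw [continuous_iff_continuousAt]
    intro z₀
    have hUopen : IsOpen ({z : ℕ → Fin b | toLex z ≤ toLex (ww (IzF l ww z₀))} ∩
        ⋂ j ∈ Finset.range (IzF l ww z₀), {z : ℕ → Fin b | toLex (ww j) < toLex z}) := by
      apply IsOpen.inter
      · exact isOpen_le_of_evtop hb (ww (IzF l ww z₀)) (NfF piv M (IzF l ww z₀))
          (fun m hm => hhitail _ m hm)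
      · exact isOpen_biInter_finset fun j _ => isOpen_gt (ww j)
    have hz₀U : z₀ ∈ ({z : ℕ → Fin b | toLex z ≤ toLex (ww (IzF l ww z₀))} ∩
        ⋂ j ∈ Finset.range (IzF l ww z₀), {z : ℕ → Fin b | toLex (ww j) < toLex z}) := by
      refine ⟨hmem2 z₀, ?_⟩
      simp only [Set.mem_iInter, Finset.mem_range, Set.mem_setOf_eq]
      intro j hj
      exact (IzF_min hj).2
    have hUeq : ∀ z ∈ ({z : ℕ → Fin b | toLex z ≤ toLex (ww (IzF l ww z₀))} ∩
        ⋂ j ∈ Finset.range (IzF l ww z₀), {z : ℕ → Fin b | toLex (ww j) < toLex z}),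
        IzF l ww z = IzF l ww z₀ := by
      rintro z ⟨hz1, hz2⟩
      simp only [Set.mem_iInter, Finset.mem_range, Set.mem_setOf_eq] at hz1 hz2
      refine le_antisymm (IzF_le_of ?_) ?_
      · rcases lt_or_eq_of_le (IzF_le_self l ww z₀) with h | h
        · exact Or.inr hz1
        · exact Or.inl h
      · by_contra hc
        push_neg at hc
        have hjlt := hz2 _ hc
        rcases IzF_spec l ww z with h | h
        · have h2 := IzF_le_self l ww z₀
          omega
        · exact absurd h (not_le.mpr hjlt)
    have hFc : Continuous (fun z => cl (loA hb k (IzF l ww z₀)) (hiA hb k (IzF l ww z₀))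
        (SF hb (NfF piv M (IzF l ww z₀)) (loF hb ww piv (IzF l ww z₀)) (ww (IzF l ww z₀)) z)) := by
      have houter : Continuous (fun u : ℕ → Fin b =>
          cl (loA hb k (IzF l ww z₀)) (hiA hb k (IzF l ww z₀)) u) :=
        continuous_of_mod (K := 0)
          (fun n x y hxy => cl_agree (fun i' hi' => hxy i' (by omega)))
      exact houter.comp (SF_cont hb _ _ _)
    refine ContinuousAt.congr hFc.continuousAt ?_
    refine Filter.eventuallyEq_of_mem (hUopen.mem_nhds hz₀U) ?_
    intro z hz
    show cl (loA hb k (IzF l ww z₀)) (hiA hb k (IzF l ww z₀))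
        (SF hb (NfF piv M (IzF l ww z₀)) (loF hb ww piv (IzF l ww z₀)) (ww (IzF l ww z₀)) z) =
      GF hb k l ww piv M z
    show _ = cl (loA hb k (IzF l ww z)) (hiA hb k (IzF l ww z))
      (SF hb (NfF piv M (IzF l ww z)) (loF hb ww piv (IzF l ww z)) (ww (IzF l ww z)) z)
    rw [hUeq z hz]
  refine ⟨GF hb k l ww piv M, ⟨hcont, hsurj, ?_⟩, ?_⟩
  · intro x y hxy
    rw [lexLE_iff] at hxy ⊢
    exact hmono x y hxy
  · intro i hi z
    have hcore : GF hb k l ww piv M z ∈ W b (sEnum b k (by omega) i) ↔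
        toLex z ≤ toLex (ww i) ∧ ∀ j, j < i → toLex (ww j) < toLex z := by
      constructor
      · intro hzW
        have hIzb := IzF_le_self l ww z
        have hIz : IzF l ww z = i := W_index_unique hb (by omega) (by omega)
          (hG_piece z) hzW hk
        refine ⟨by rw [← hIz]; exact hmem2 z, fun j hj => ?_⟩
        exact (IzF_min (by omega : j < IzF l ww z)).2
      · rintro ⟨h1, h2⟩
        have hIz : IzF l ww z = i := by
          refine hIzeq i (by omega) z ?_ h1
          rcases Nat.eq_zero_or_pos i with rfl | hpos
          · rw [hlo0]; exact bot'_le hb z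
          · rw [hlos i hpos]
            exact scOne_le_of_lt hb _ _ (hpiv1 _ (by omega)) (hpiv2 _ (by omega)) z
              (h2 (i - 1) (by omega))
        have := hG_piece z
        rw [hIz] at this
        exact this
    refine hcore.trans ?_
    constructor
    · rintro ⟨h1, h2⟩
      refine ⟨by rwa [hwwl i hi] at h1, fun j hj => ?_⟩
      have := h2 j hj
      rwa [hwwl j (by omega)] at this
    · rintro ⟨h1, h2⟩
      refine ⟨by rwa [hwwl i hi], fun j hj => ?_⟩
      have := h2 j hj
      rwa [hwwl j (by omega)]

/-! ### top sequence facts -/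

theorem eq_top'_of_forall (hb : 2 ≤ b) {x : ℕ → Fin b}
    (h : ∀ n, ∀ j : Fin b, j ≤ x n) : x = top' hb := by
  funext n
  refine le_antisymm ?_ (h n _)
  rw [Fin.le_def]
  have := (x n).isLt
  simp [top']
  omega

theorem top'_forall (hb : 2 ≤ b) : ∀ n, ∀ j : Fin b, j ≤ top' hb n := by
  intro n j
  rw [Fin.le_def]
  have := j.isLt
  simp [top']
  omega

end FFR

open FFR in
/-- the strictly increasing `(b^k - 1)`-tuples from `Y_h` are exactly the
tuples `(max (f∘h)⁻¹(W_{s^k_i}))_{i < b^k - 1}` as `f` ranges over `C↑_sur(b^ω)`. -/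
theorem finding_function_relative (b : ℕ) (hb : 2 ≤ b) (k : ℕ) (hk : 1 ≤ k)
    (h : (ℕ → Fin b) → (ℕ → Fin b)) (hh : CSur b h) :
    {v : Fin (b ^ k - 1) → (ℕ → Fin b) |
        (∀ i, v i ∈ Yset b h) ∧ ∀ i j, i < j → lexLT b (v i) (v j)} =
      {v | ∃ f, CSur b f ∧ ∀ i : Fin (b ^ k - 1),
        IsGreatestLex b ((f ∘ h) ⁻¹' W b (sEnum b k (by omega) (i : ℕ))) (v i)} := by
  classical
  have hbk2 : 2 ≤ b ^ k := le_trans hb (Nat.le_self_pow (by omega) b)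
  set l : ℕ := b ^ k - 1 with hldef
  have hlk : b ^ k = l + 1 := by omega
  ext v
  simp only [Set.mem_setOf_eq]
  constructor
  · rintro ⟨hY, hInc⟩
    -- LHS ⊆ RHS : build the finding function
    have hP1 : ∀ i : Fin l, ∀ x, toLex (h x) ≤ toLex (h (v i)) → toLex x ≤ toLex (v i) := by
      intro i x hle
      obtain ⟨⟨t, hmem, hub⟩, hnt⟩ := hY i
      by_contra hc
      have hvx : lexLE b (v i) x := lexLE_iff.mpr (not_le.mp hc).le
      have h2 : lexLE b (h (v i)) (h x) := hh.2.2 _ _ hvx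
      have h3 : toLex (h x) = toLex (h (v i)) := le_antisymm hle (lexLE_iff.mp h2)
      have h4 : h x = h (v i) := by exact_mod_cast h3
      have h5 : x ∈ h ⁻¹' W b t := by
        show h x ∈ W b t
        rw [h4]; exact hmem
      have h6 := lexLE_iff.mp (hub x h5)
      exact absurd h6 (not_le.mpr (not_le.mp hc))
    have htail : ∀ i : Fin l, ∃ M, ∀ m, M ≤ m → h (v i) m = ⟨b - 1, by omega⟩ := by
      intro i
      obtain ⟨⟨t, hmem, hub⟩, hnt⟩ := hY i
      have hgr : ∀ y ∈ W b t, toLex y ≤ toLex (h (v i)) := by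
        intro y hy
        obtain ⟨x, rfl⟩ := hh.2.1 y
        exact lexLE_iff.mp (hh.2.2 _ _ (hub x hy))
      refine ⟨t.length, ?_⟩
      set ytop : ℕ → Fin b :=
        (fun m => if hm : m < t.length then h (v i) m else ⟨b - 1, by omega⟩) with hyt
      have h1 : ytop ∈ W b t := by
        intro m hm
        simp only [hyt, dif_pos hm]
        exact hmem m hm
      have h2 : toLex ytop ≤ toLex (h (v i)) := hgr ytop h1
      have h3 : toLex (h (v i)) ≤ toLex ytop := by
        refine le_of_agree_top_tail hb (m := t.length) ?_ ?_
        · intro m hm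
          show h (v i) m = ytop m
          simp [hyt, hm]
        · intro m hm
          show ytop m = _
          simp [hyt, show ¬ m < t.length by omega]
      have h4 : h (v i) = ytop := by exact_mod_cast le_antisymm h3 h2
      intro m hm
      rw [h4]
      show ytop m = _
      simp [hyt, show ¬ m < t.length by omega]
    have hne : ∀ i : Fin l, h (v i) ≠ top' hb := by
      intro i hc
      obtain ⟨⟨t, hmem, hub⟩, hnt⟩ := hY i
      apply hnt
      have hall : ∀ x, toLex x ≤ toLex (v i) :=
        fun x => hP1 i x (by rw [hc]; exact le_top' hb _)
      have h2 : v i = top' hb := by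
        exact_mod_cast le_antisymm (le_top' hb (v i)) (hall (top' hb))
      rw [h2]; exact top'_forall hb
    have hwlt : ∀ i j : Fin l, i < j → toLex (h (v i)) < toLex (h (v j)) := by
      intro i j hij
      have hv := lexLT_iff.mp (hInc i j hij)
      have h1 : toLex (h (v i)) ≤ toLex (h (v j)) :=
        lexLE_iff.mp (hh.2.2 _ _ (lexLE_iff.mpr hv.le))
      rcases lt_or_eq_of_le h1 with hcase | hcase
      · exact hcase
      · exfalso
        have h2 := hP1 i (v j) (le_of_eq hcase.symm)
        exact absurd hv (not_lt.mpr h2)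
    set wfun : ℕ → ℕ → Fin b :=
      (fun i => if hi : i < l then h (v ⟨i, hi⟩) else top' hb) with hwf
    have hwv : ∀ i : Fin l, wfun (i : ℕ) = h (v i) := by
      intro i
      simp [hwf, i.isLt]
    obtain ⟨g, hgCS, hgchar⟩ := exists_glue hb k l hk rfl wfun
      (by
        intro i j hij hjl
        have := hwlt ⟨i, by omega⟩ ⟨j, hjl⟩ (by exact hij)
        rwa [← hwv ⟨i, by omega⟩, ← hwv ⟨j, hjl⟩] at this)
      (by
        intro i hi
        obtain ⟨M, hM⟩ := htail ⟨i, hi⟩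
        exact ⟨M, fun m hm => by rw [hwv ⟨i, hi⟩]; exact hM m hm⟩)
      (by
        intro i hi
        rw [hwv ⟨i, hi⟩]
        exact hne ⟨i, hi⟩)
    refine ⟨g, hgCS, ?_⟩
    intro i
    constructor
    · show g (h (v i)) ∈ W b (sEnum b k (by omega) (i : ℕ))
      refine (hgchar (i : ℕ) i.isLt (h (v i))).mpr ⟨?_, ?_⟩
      · rw [hwv i]
      · intro j hj
        have h9 := hwlt ⟨j, by omega⟩ i (by simpa [Fin.lt_def] using hj)
        rw [← hwv ⟨j, by omega⟩] at h9
        exact h9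
    · intro x hx
      have hx' : g (h x) ∈ W b (sEnum b k (by omega) (i : ℕ)) := hx
      have h1 := ((hgchar (i : ℕ) i.isLt (h x)).mp hx').1
      rw [hwv i] at h1
      exact lexLE_iff.mpr (hP1 i x h1)
  · rintro ⟨f, hfCS, hG⟩
    obtain ⟨hfc, hfs, hfm⟩ := hfCS
    have hFsur : Function.Surjective (f ∘ h) := hfs.comp hh.2.1
    have hFmono : ∀ x y, lexLE b x y → lexLE b (f (h x)) (f (h y)) :=
      fun x y hxy => hfm _ _ (hh.2.2 _ _ hxy)
    have hFW : ∀ i : Fin l, f (h (v i)) ∈ W b (sEnum b k (by omega) (i : ℕ)) :=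
      fun i => (hG i).1
    constructor
    · intro i
      -- Yset membership
      have hcylopen : IsOpen {y : ℕ → Fin b | ∀ m, m < k → y m = f (h (v i)) m} := by
        have heq : {y : ℕ → Fin b | ∀ m, m < k → y m = f (h (v i)) m} =
            ⋂ m ∈ Finset.range k, {y : ℕ → Fin b | y m = f (h (v i)) m} := by
          ext y; simp [Set.mem_iInter]
        rw [heq]
        exact isOpen_biInter_finset fun m _ => isOpen_coord m _
      have hAopen : IsOpen (f ⁻¹' {y : ℕ → Fin b | ∀ m, m < k → y m = f (h (v i)) m}) :=
        hcylopen.preimage hfc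
      have hmemA : h (v i) ∈ f ⁻¹' {y : ℕ → Fin b | ∀ m, m < k → y m = f (h (v i)) m} :=
        fun m _ => rfl
      obtain ⟨N, hN⟩ := exists_cylinder_subset hAopen hmemA
      refine ⟨⟨List.ofFn (fun j : Fin N => h (v i) j), ?_, ?_⟩, ?_⟩
      · -- h (v i) ∈ W b t
        intro m hm
        rw [List.get_ofFn]
        rfl
      · intro x hx
        have hagree : ∀ m, m < N → h x m = h (v i) m := by
          intro m hm
          have hm' : m < (List.ofFn (fun j : Fin N => h (v i) j)).length := by
            simpa using hm
          have := hx m hm'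
          rwa [List.get_ofFn] at this
        have hxA := hN (h x) hagree
        have hfx : f (h x) ∈ W b (sEnum b k (by omega) (i : ℕ)) := by
          rw [mem_W_sEnum hb]
          intro m hm
          have h1 : f (h x) m = f (h (v i)) m := hxA m hm
          rw [h1]
          exact (mem_W_sEnum hb).mp (hFW i) m hm
        exact (hG i).2 x hfx
      · -- not the top sequence
        intro hforall
        have hvt : v i = top' hb := eq_top'_of_forall hb hforall
        obtain ⟨x, hxt⟩ := hFsur (top' hb)
        have h1 : lexLE b x (v i) := by
          rw [hvt]
          exact lexLE_iff.mpr (le_top' hb x)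
        have h2 : toLex (top' hb) ≤ toLex (f (h (v i))) := by
          have := lexLE_iff.mp (hFmono x (v i) h1)
          rwa [show f (h x) = top' hb from hxt] at this
        have h3 : f (h (v i)) = top' hb := by
          exact_mod_cast le_antisymm (le_top' hb _) h2
        have h4 : top' hb ∈ W b (sEnum b k (by omega) (i : ℕ)) := h3 ▸ hFW i
        have h5 : (i : ℕ) = b ^ k - 1 := top_W_index hb (by have := i.isLt; omega) h4
        have := i.isLt
        omega
    · intro i j hij
      have hlt : toLex (f (h (v i))) < toLex (f (h (v j))) :=
        W_lt_W hb (show (i : ℕ) < (j : ℕ) from hij) (by have := j.isLt; omega)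
          (hFW i) (hFW j)
      rw [lexLT_iff]
      by_contra hc
      have h1 : toLex (v j) ≤ toLex (v i) := not_lt.mp hc
      have h2 := lexLE_iff.mp (hFmono (v j) (v i) (lexLE_iff.mpr h1))
      exact absurd h2 (not_le.mpr hlt)
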